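/- The minimum of the six quantities √(2(1 − tr(ρ_S²))), taken over the seven bipartitions S ∈ {{1},{2},{3},{4},{1,2},{1,3},{1,4}}, equals √3/2 for both |ψ_A⟩ = (|0000⟩+|1011⟩+|1101⟩+|1110⟩)/2 and |ψ_B⟩ = (|0000⟩+|0101⟩+|1000⟩+|1110⟩)/2; hence the genuinely multipartite concurrence C_GME cannot distinguish |ψ_A⟩ from |ψ_B⟩. -/
import Mathlib


open scoped BigOperators

noncomputable section

/-- A four-qubit pure state amplitude function on the computational basis. -/
abbrev QState := Fin 2 → Fin 2 → Fin 2 → Fin 2 → ℂ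

/-- Reduced density matrix of qubit 1. -/
def rho1 (ψ : QState) (a b : Fin 2) : ℂ := ∑ i, ∑ j, ∑ k, ψ a i j k * star (ψ b i j k)
/-- Reduced density matrix of qubit 2. -/
def rho2 (ψ : QState) (a b : Fin 2) : ℂ := ∑ i, ∑ j, ∑ k, ψ i a j k * star (ψ i b j k)
/-- Reduced density matrix of qubit 3. -/
def rho3 (ψ : QState) (a b : Fin 2) : ℂ := ∑ i, ∑ j, ∑ k, ψ i j a k * star (ψ i j b k)
/-- Reduced density matrix of qubit 4. -/
def rho4 (ψ : QState) (a b : Fin 2) : ℂ := ∑ i, ∑ j, ∑ k, ψ i j k a * star (ψ i j k b)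

/-- tr(ρ²) for a one-qubit density matrix. -/
def purity1 (ρ : Fin 2 → Fin 2 → ℂ) : ℂ := ∑ a, ∑ b, ρ a b * ρ b a

/-- Reduced density matrix of qubits 1,2. -/
def rho12 (ψ : QState) (a b : Fin 2 × Fin 2) : ℂ :=
  ∑ i, ∑ j, ψ a.1 a.2 i j * star (ψ b.1 b.2 i j)
/-- Reduced density matrix of qubits 1,3. -/
def rho13 (ψ : QState) (a b : Fin 2 × Fin 2) : ℂ :=
  ∑ i, ∑ j, ψ a.1 i a.2 j * star (ψ b.1 i b.2 j)
/-- Reduced density matrix of qubits 1,4. -/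
def rho14 (ψ : QState) (a b : Fin 2 × Fin 2) : ℂ :=
  ∑ i, ∑ j, ψ a.1 i j a.2 * star (ψ b.1 i j b.2)

/-- tr(ρ²) for a two-qubit density matrix. -/
def purity2 (ρ : Fin 2 × Fin 2 → Fin 2 × Fin 2 → ℂ) : ℂ := ∑ a, ∑ b, ρ a b * ρ b a

/-- The concurrence across a bipartition, from tr(ρ²). -/
def conc (p : ℂ) : ℝ := Real.sqrt (2 * (1 - p.re))

/-- The seven distinct bipartition concurrences of a four-qubit state. -/
def concs (ψ : QState) : Fin 7 → ℝ :=
  ![conc (purity1 (rho1 ψ)), conc (purity1 (rho2 ψ)), conc (purity1 (rho3 ψ)),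
    conc (purity1 (rho4 ψ)), conc (purity2 (rho12 ψ)), conc (purity2 (rho13 ψ)),
    conc (purity2 (rho14 ψ))]

def psiA : QState := fun a b c d =>
  if (a, b, c, d) = (0, 0, 0, 0) ∨ (a, b, c, d) = (1, 0, 1, 1) ∨
     (a, b, c, d) = (1, 1, 0, 1) ∨ (a, b, c, d) = (1, 1, 1, 0)
  then (1 / 2 : ℂ) else 0

def psiB : QState := fun a b c d =>
  if (a, b, c, d) = (0, 0, 0, 0) ∨ (a, b, c, d) = (0, 1, 0, 1) ∨
     (a, b, c, d) = (1, 0, 0, 0) ∨ (a, b, c, d) = (1, 1, 1, 0)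
  then (1 / 2 : ℂ) else 0


lemma sqrt34 : Real.sqrt (3/4) = Real.sqrt 3 / 2 := by
  have h4 : Real.sqrt 4 = 2 := by
    rw [show (4:ℝ)=2^2 by norm_num, Real.sqrt_sq (by norm_num : (0:ℝ) ≤ 2)]
  rw [Real.sqrt_div (by norm_num : (0:ℝ) ≤ 3), h4]

lemma conc_eval (p : ℂ) (q : ℝ) (h : p.re = q) : conc p = Real.sqrt (2*(1-q)) := by
  rw [conc, h]

lemma pA1 : purity1 (rho1 psiA) = 5/8 := by
  simp only [purity1, rho1, psiA, Fin.sum_univ_two]; norm_num [Prod.ext_iff]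
lemma pA2 : purity1 (rho2 psiA) = 1/2 := by
  simp only [purity1, rho2, psiA, Fin.sum_univ_two]; norm_num [Prod.ext_iff]
lemma pA3 : purity1 (rho3 psiA) = 1/2 := by
  simp only [purity1, rho3, psiA, Fin.sum_univ_two]; norm_num [Prod.ext_iff]
lemma pA4 : purity1 (rho4 psiA) = 1/2 := by
  simp only [purity1, rho4, psiA, Fin.sum_univ_two]; norm_num [Prod.ext_iff]
lemma pA12 : purity2 (rho12 psiA) = 3/8 := by
  simp only [purity2, rho12, psiA, Fintype.sum_prod_type, Fin.sum_univ_two]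
  norm_num [Prod.ext_iff]
lemma pA13 : purity2 (rho13 psiA) = 3/8 := by
  simp only [purity2, rho13, psiA, Fintype.sum_prod_type, Fin.sum_univ_two]
  norm_num [Prod.ext_iff]
lemma pA14 : purity2 (rho14 psiA) = 3/8 := by
  simp only [purity2, rho14, psiA, Fintype.sum_prod_type, Fin.sum_univ_two]
  norm_num [Prod.ext_iff]

lemma pB1 : purity1 (rho1 psiB) = 5/8 := by
  simp only [purity1, rho1, psiB, Fin.sum_univ_two]; norm_num [Prod.ext_iff]
lemma pB2 : purity1 (rho2 psiB) = 1/2 := by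
  simp only [purity1, rho2, psiB, Fin.sum_univ_two]; norm_num [Prod.ext_iff]
lemma pB3 : purity1 (rho3 psiB) = 5/8 := by
  simp only [purity1, rho3, psiB, Fin.sum_univ_two]; norm_num [Prod.ext_iff]
lemma pB4 : purity1 (rho4 psiB) = 5/8 := by
  simp only [purity1, rho4, psiB, Fin.sum_univ_two]; norm_num [Prod.ext_iff]
lemma pB12 : purity2 (rho12 psiB) = 3/8 := by
  simp only [purity2, rho12, psiB, Fintype.sum_prod_type, Fin.sum_univ_two]
  norm_num [Prod.ext_iff]
lemma pB13 : purity2 (rho13 psiB) = 1/2 := by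
  simp only [purity2, rho13, psiB, Fintype.sum_prod_type, Fin.sum_univ_two]
  norm_num [Prod.ext_iff]
lemma pB14 : purity2 (rho14 psiB) = 1/2 := by
  simp only [purity2, rho14, psiB, Fintype.sum_prod_type, Fin.sum_univ_two]
  norm_num [Prod.ext_iff]

lemma conc58 (p : ℂ) (h : p = 5/8) : conc p = Real.sqrt 3 / 2 := by
  rw [conc_eval p (5/8) (by rw [h]; norm_num), show 2*(1-(5/8:ℝ)) = 3/4 by norm_num, sqrt34]
lemma conc12 (p : ℂ) (h : p = 1/2) : conc p = Real.sqrt 1 := by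
  rw [conc_eval p (1/2) (by rw [h]; norm_num)]; norm_num
lemma conc38 (p : ℂ) (h : p = 3/8) : conc p = Real.sqrt (5/4) := by
  rw [conc_eval p (3/8) (by rw [h]; norm_num)]; norm_num

lemma min_key (f : Fin 7 → ℝ) (h0 : f 0 = Real.sqrt 3 / 2)
    (hall : ∀ i, Real.sqrt 3 / 2 ≤ f i) :
    Finset.univ.inf' Finset.univ_nonempty f = Real.sqrt 3 / 2 := by
  refine le_antisymm (le_of_le_of_eq (Finset.inf'_le _ (Finset.mem_univ 0)) h0) ?_
  exact Finset.le_inf' _ _ (fun i _ => hall i)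

lemma sqrt34_le_1 : Real.sqrt 3 / 2 ≤ Real.sqrt 1 := by
  rw [← sqrt34]; exact Real.sqrt_le_sqrt (by norm_num)
lemma sqrt34_le_54 : Real.sqrt 3 / 2 ≤ Real.sqrt (5/4) := by
  rw [← sqrt34]; exact Real.sqrt_le_sqrt (by norm_num)

theorem stmt10 :
    Finset.univ.inf' Finset.univ_nonempty (concs psiA) = Real.sqrt 3 / 2 ∧
    Finset.univ.inf' Finset.univ_nonempty (concs psiB) = Real.sqrt 3 / 2 := by
  constructor
  · refine min_key _ (by simp [concs, conc58 _ pA1]) (fun i => ?_)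
    fin_cases i <;>
      simp only [concs, conc58 _ pA1, conc12 _ pA2, conc12 _ pA3, conc12 _ pA4,
        conc38 _ pA12, conc38 _ pA13, conc38 _ pA14] <;>
      first | exact le_refl _ | exact sqrt34_le_1 | exact sqrt34_le_54
  · refine min_key _ (by simp [concs, conc58 _ pB1]) (fun i => ?_)
    fin_cases i <;>
      simp only [concs, conc58 _ pB1, conc12 _ pB2, conc58 _ pB3, conc58 _ pB4,
        conc38 _ pB12, conc12 _ pB13, conc12 _ pB14] <;>
      first | exact le_refl _ | exact sqrt34_le_1 | exact sqrt34_le_54
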